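/- Let S_n be a Binomial(n, r) random variable with r = 1/2 − ε, ε ∈ [0, 1/2). Then for all x ∈ [0,1], P(S_n > (n/2)(x+1)) ≤ exp(−n·g(x)) where g(t) = ((1+t)/2)log((1+t)/(1−2ε)) + ((1−t)/2)log((1−t)/(1+2ε)). Consequently, ∫_0^1 P(S_n > (n/2)(x+1)) dx ≤ min( e^{−n g(0)}/(n g'(0)), √(π/(2n)) ). -/

import Mathlib

open Real Set Finset

lemma aux_deriv_F {t : ℝ} (h1 : -1 < t) (h2 : t < 1) :
    HasDerivAt (fun t : ℝ => Real.log (1 + t) - Real.log (1 - t) - 2 * t)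
      (1 / (1 + t) - (-1) / (1 - t) - 2) t := by
  have d1 : HasDerivAt (fun t : ℝ => Real.log (1 + t)) (1 / (1 + t)) t :=
    ((hasDerivAt_id t).const_add 1).log (by intro h; simp only [id_eq] at h; nlinarith)
  have d2 : HasDerivAt (fun t : ℝ => Real.log (1 - t)) ((-1) / (1 - t)) t := by
    have := ((hasDerivAt_id t).const_sub 1).log (x := t)
      (by intro h; simp only [id_eq] at h; nlinarith)
    simpa using this
  have d3 : HasDerivAt (fun t : ℝ => 2 * t) 2 t := by
    simpa using (hasDerivAt_id t).const_mul 2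
  exact (d1.sub d2).sub d3

lemma aux_log_ratio {x : ℝ} (hx0 : 0 ≤ x) (hx1 : x < 1) :
    2 * x ≤ Real.log (1 + x) - Real.log (1 - x) := by
  set F : ℝ → ℝ := fun t => Real.log (1 + t) - Real.log (1 - t) - 2 * t with hF
  have key : MonotoneOn F (Icc 0 x) := by
    apply monotoneOn_of_deriv_nonneg (convex_Icc 0 x)
    · apply ContinuousOn.sub (ContinuousOn.sub ?_ ?_) (by fun_prop)
      · exact (continuousOn_const.add continuousOn_id).log (fun t ht => by
          rcases ht with ⟨h1, h2⟩; intro h; have h' : (1:ℝ) + t = 0 := h; nlinarith)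
      · exact (continuousOn_const.sub continuousOn_id).log (fun t ht => by
          rcases ht with ⟨h1, h2⟩; intro h; have h' : (1:ℝ) - t = 0 := h; nlinarith)
    · intro t ht
      rw [interior_Icc] at ht
      rcases ht with ⟨h1, h2⟩
      exact (aux_deriv_F (by linarith) (by linarith)).differentiableAt.differentiableWithinAt
    · intro t ht
      rw [interior_Icc] at ht
      rcases ht with ⟨h1, h2⟩
      have h2' : t < 1 := lt_of_lt_of_le h2 hx1.le
      rw [(aux_deriv_F (by linarith) h2').deriv]
      have e1 : (0:ℝ) < 1 + t := by nlinarith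
      have e2 : (0:ℝ) < 1 - t := by nlinarith
      have key : 1 / (1 + t) - (-1) / (1 - t) - 2 = 2 * t ^ 2 / ((1 + t) * (1 - t)) := by
        field_simp; ring
      rw [key]; positivity
  have h0 : F 0 ≤ F x := key ⟨le_refl 0, hx0⟩ ⟨hx0, le_refl x⟩ hx0
  simp only [hF] at h0
  norm_num at h0
  linarith

lemma aux_deriv_G {t : ℝ} (h1 : -1 < t) (h2 : t < 1) :
    HasDerivAt (fun t : ℝ => (1 + t) / 2 * Real.log (1 + t)
        + (1 - t) / 2 * Real.log (1 - t) - t ^ 2 / 2)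
      ((1 / 2) * Real.log (1 + t) + 1 / 2 - ((1 / 2) * Real.log (1 - t) + 1 / 2) - t) t := by
  have d1 : HasDerivAt (fun t : ℝ => Real.log (1 + t)) (1 / (1 + t)) t :=
    ((hasDerivAt_id t).const_add 1).log (by intro h; simp only [id_eq] at h; nlinarith)
  have d2 : HasDerivAt (fun t : ℝ => Real.log (1 - t)) ((-1) / (1 - t)) t := by
    have := ((hasDerivAt_id t).const_sub 1).log (x := t)
      (by intro h; simp only [id_eq] at h; nlinarith)
    simpa using this
  have a1 : HasDerivAt (fun t : ℝ => (1 + t) / 2) (1 / 2) t := by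
    simpa using (((hasDerivAt_id t).const_add 1).div_const 2)
  have a2 : HasDerivAt (fun t : ℝ => (1 - t) / 2) (-(1 / 2)) t := by
    have : HasDerivAt (fun t : ℝ => (1 - t) / 2) (-1 / 2) t :=
      (((hasDerivAt_id t).const_sub 1).div_const 2)
    convert this using 1; norm_num
  have m1 := a1.mul d1
  have m2 := a2.mul d2
  have p : HasDerivAt (fun t : ℝ => t ^ 2 / 2) t t := by
    simpa using ((hasDerivAt_pow 2 t).div_const 2)
  have := (m1.add m2).sub p
  refine this.congr_deriv ?_
  have e1 : (1:ℝ) + t ≠ 0 := by intro h; nlinarith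
  have e2 : (1:ℝ) - t ≠ 0 := by intro h; nlinarith
  field_simp
  ring

lemma aux_quad {x : ℝ} (hx0 : 0 ≤ x) (hx1 : x ≤ 1) :
    x ^ 2 / 2 ≤ (1 + x) / 2 * Real.log (1 + x) + (1 - x) / 2 * Real.log (1 - x) := by
  rcases eq_or_lt_of_le hx1 with h | hlt
  · subst h  -- wrong direction? hx1 : x ≤ 1, eq: x = 1
    norm_num
    have := Real.log_two_gt_d9
    linarith
  · set G : ℝ → ℝ := fun t => (1 + t) / 2 * Real.log (1 + t)
      + (1 - t) / 2 * Real.log (1 - t) - t ^ 2 / 2 with hG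
    have key : MonotoneOn G (Icc 0 x) := by
      apply monotoneOn_of_deriv_nonneg (convex_Icc 0 x)
      · apply ContinuousOn.sub (ContinuousOn.add ?_ ?_) (by fun_prop)
        · exact ContinuousOn.mul (by fun_prop)
            ((continuousOn_const.add continuousOn_id).log (fun t ht => by
              rcases ht with ⟨h1, h2⟩; intro h; have h' : (1:ℝ) + t = 0 := h; nlinarith))
        · exact ContinuousOn.mul (by fun_prop)
            ((continuousOn_const.sub continuousOn_id).log (fun t ht => by
              rcases ht with ⟨h1, h2⟩; intro h; have h' : (1:ℝ) - t = 0 := h; nlinarith))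
      · intro t ht
        rw [interior_Icc] at ht
        rcases ht with ⟨h1, h2⟩
        exact (aux_deriv_G (by linarith) (by linarith)).differentiableAt.differentiableWithinAt
      · intro t ht
        rw [interior_Icc] at ht
        rcases ht with ⟨h1, h2⟩
        have h2' : t < 1 := lt_of_lt_of_le h2 hlt.le
        rw [(aux_deriv_G (by linarith) h2').deriv]
        have := aux_log_ratio h1.le h2'
        linarith
    have h0 : G 0 ≤ G x := key ⟨le_refl 0, hx0⟩ ⟨hx0, le_refl x⟩ hx0
    simp only [hG] at h0
    norm_num at h0
    linarith

lemma chernoff_pt (n : ℕ) (ε x : ℝ) (hε0 : 0 ≤ ε) (hε : ε < 1/2)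
    (hx0 : 0 ≤ x) (hx1 : x < 1) :
    (∑ k ∈ Finset.range (n+1), if (n:ℝ)/2*(x+1) < k then
        (n.choose k : ℝ) * (1/2-ε)^k * (1-(1/2-ε))^(n-k) else 0)
    ≤ Real.exp (-(n:ℝ) * ((1+x)/2 * Real.log ((1+x)/(1-2*ε))
        + (1-x)/2 * Real.log ((1-x)/(1+2*ε)))) := by
  have hA : (0:ℝ) < 1 + 2*ε := by linarith
  have hB : (0:ℝ) < 1 - 2*ε := by linarith
  have hxp : (0:ℝ) < 1 + x := by linarith
  have hxm : (0:ℝ) < 1 - x := by linarith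
  have hr : (0:ℝ) < 1/2 - ε := by linarith
  have hq : (0:ℝ) < 1 - (1/2 - ε) := by linarith
  set a : ℝ := (n:ℝ)/2*(x+1) with ha
  set L : ℝ := Real.log ((1+2*ε)*(1+x)) - Real.log ((1-2*ε)*(1-x)) with hLdef
  have hL : 0 ≤ L := by
    rw [hLdef, sub_nonneg]
    apply Real.log_le_log (by positivity)
    nlinarith
  have ha_nonneg : 0 ≤ a := by positivity
  -- step 1
  have step1 : (∑ k ∈ Finset.range (n+1), if (n:ℝ)/2*(x+1) < k then
        (n.choose k : ℝ) * (1/2-ε)^k * (1-(1/2-ε))^(n-k) else 0)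
      ≤ ∑ k ∈ Finset.range (n+1),
        Real.exp (L * ((k:ℝ) - a)) * ((n.choose k : ℝ) * (1/2-ε)^k * (1-(1/2-ε))^(n-k)) := by
    apply Finset.sum_le_sum
    intro k hk
    have hp : (0:ℝ) ≤ (n.choose k : ℝ) * (1/2-ε)^k * (1-(1/2-ε))^(n-k) := by positivity
    split_ifs with h
    · refine le_mul_of_one_le_left hp (Real.one_le_exp ?_)
      have : a ≤ (k:ℝ) := le_of_lt h
      exact mul_nonneg hL (by linarith)
    · positivity
  -- step 2 : rewrite RHS sum
  have step2 : ∑ k ∈ Finset.range (n+1),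
        Real.exp (L * ((k:ℝ) - a)) * ((n.choose k : ℝ) * (1/2-ε)^k * (1-(1/2-ε))^(n-k))
      = Real.exp (-L * a) * ((1/2-ε) * Real.exp L + (1-(1/2-ε)))^n := by
    rw [add_pow, Finset.mul_sum]
    apply Finset.sum_congr rfl
    intro k hk
    have e : Real.exp (L * ((k:ℝ) - a)) = Real.exp L ^ k * Real.exp (-L * a) := by
      rw [← Real.exp_nat_mul, ← Real.exp_add]
      congr 1
      ring
    rw [e, mul_pow]
    ring
  -- step 3
  have step3 : (1/2-ε) * Real.exp L + (1-(1/2-ε)) = (1+2*ε)/(1-x) := by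
    rw [hLdef, Real.exp_sub, Real.exp_log (by positivity), Real.exp_log (by positivity)]
    field_simp
    ring
  -- step 4
  have hRpos : (0:ℝ) < (1+2*ε)/(1-x) := by positivity
  have step4 : Real.exp (-L * a) * ((1+2*ε)/(1-x))^n
      = Real.exp (-(n:ℝ) * ((1+x)/2 * Real.log ((1+x)/(1-2*ε))
        + (1-x)/2 * Real.log ((1-x)/(1+2*ε)))) := by
    rw [← Real.exp_log hRpos, ← Real.exp_nat_mul, ← Real.exp_add]
    congr 1
    rw [hLdef, ha, Real.log_mul (ne_of_gt hA) (ne_of_gt hxp),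
      Real.log_mul (ne_of_gt hB) (ne_of_gt hxm),
      Real.log_div (ne_of_gt hA) (ne_of_gt hxm),
      Real.log_div (ne_of_gt hxp) (ne_of_gt hB),
      Real.log_div (ne_of_gt hxm) (ne_of_gt hA)]
    ring
  calc _ ≤ _ := step1
    _ = _ := step2
    _ = _ := by rw [step3, step4]

lemma g_eq (ε x : ℝ) (hB : (0:ℝ) < 1-2*ε) (hA : (0:ℝ) < 1+2*ε)
    (hxp : (0:ℝ) < 1+x) (hxm : (0:ℝ) < 1-x) :
    (1+x)/2 * Real.log ((1+x)/(1-2*ε)) + (1-x)/2 * Real.log ((1-x)/(1+2*ε))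
      = ((1+x)/2 * Real.log (1+x) + (1-x)/2 * Real.log (1-x))
        + x * ((1/2) * Real.log ((1+2*ε)/(1-2*ε)))
        + (-(1/2) * Real.log (1-4*ε^2)) := by
  rw [Real.log_div (ne_of_gt hxp) (ne_of_gt hB), Real.log_div (ne_of_gt hxm) (ne_of_gt hA),
    Real.log_div (ne_of_gt hA) (ne_of_gt hB),
    show (1-4*ε^2 : ℝ) = (1+2*ε)*(1-2*ε) by ring, Real.log_mul (ne_of_gt hA) (ne_of_gt hB)]
  ring

set_option maxHeartbeats 1000000 in
theorem binomial_tail_chernoff (n : ℕ) (hn : 1 ≤ n)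
    (ε : ℝ) (hε0 : 0 ≤ ε) (hε : ε < 1 / 2) :
    let r : ℝ := 1 / 2 - ε
    let tail : ℝ → ℝ := fun x =>
      ∑ k ∈ Finset.range (n + 1),
        if (n : ℝ) / 2 * (x + 1) < k then
          (n.choose k : ℝ) * r ^ k * (1 - r) ^ (n - k) else 0
    let g : ℝ → ℝ := fun t =>
      (1 + t) / 2 * Real.log ((1 + t) / (1 - 2 * ε))
        + (1 - t) / 2 * Real.log ((1 - t) / (1 + 2 * ε))
    (∀ x ∈ Icc (0 : ℝ) 1, tail x ≤ Real.exp (-(n : ℝ) * g x)) ∧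
    (∫ x in (0 : ℝ)..1, tail x) ≤ Real.sqrt (π / (2 * n)) ∧
    (0 < ε →
      (∫ x in (0 : ℝ)..1, tail x) ≤
        Real.exp (-(n : ℝ) * (-(1 / 2) * Real.log (1 - 4 * ε ^ 2)))
          / ((n : ℝ) * ((1 / 2) * Real.log ((1 + 2 * ε) / (1 - 2 * ε))))) := by
  intro r tail g
  have hA : (0:ℝ) < 1 + 2*ε := by linarith
  have hB : (0:ℝ) < 1 - 2*ε := by linarith
  have hnpos : (0:ℝ) < n := by exact_mod_cast Nat.lt_of_lt_of_le Nat.zero_lt_one hn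
  have htail1 : tail 1 = 0 := by
    apply Finset.sum_eq_zero
    intro k hk
    rw [if_neg]
    push_neg
    have hk' : (k:ℝ) ≤ n := by exact_mod_cast Nat.lt_succ_iff.mp (Finset.mem_range.mp hk)
    calc (k:ℝ) ≤ n := hk'
      _ = (n:ℝ)/2 * (1+1) := by ring
  have htail_nonneg : ∀ x, 0 ≤ tail x := by
    intro x
    apply Finset.sum_nonneg
    intro k hk
    have hr : (0:ℝ) ≤ r := by simp only [r]; linarith
    have hr1 : (0:ℝ) ≤ 1 - r := by simp only [r]; linarith
    split_ifs
    · positivity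
    · exact le_refl 0
  set c : ℝ := (1/2) * Real.log ((1+2*ε)/(1-2*ε)) with hc_def
  set g0 : ℝ := -(1/2) * Real.log (1-4*ε^2) with hg0_def
  have hc : 0 ≤ c := by
    apply mul_nonneg (by norm_num)
    apply Real.log_nonneg
    rw [le_div_iff₀ hB]
    linarith
  have hg0 : 0 ≤ g0 := by
    rw [hg0_def, neg_mul, neg_nonneg]
    apply mul_nonpos_of_nonneg_of_nonpos (by norm_num)
    apply Real.log_nonpos (by nlinarith) (by nlinarith)
  -- pointwise chernoff
  have hpt : ∀ x ∈ Icc (0:ℝ) 1, tail x ≤ Real.exp (-(n:ℝ) * g x) := by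
    rintro x ⟨hx0, hx1⟩
    rcases lt_or_eq_of_le hx1 with hlt | heq
    · exact chernoff_pt n ε x hε0 hε hx0 hlt
    · rw [heq, htail1]; positivity
  -- quadratic-decomposed bounds on g
  have hgq : ∀ x ∈ Icc (0:ℝ) 1, x^2/2 ≤ g x ∧ g0 + c * x ≤ g x := by
    rintro x ⟨hx0, hx1⟩
    rcases lt_or_eq_of_le hx1 with hlt | heq
    · have hdec := g_eq ε x hB hA (by linarith) (by linarith)
      have hq := aux_quad hx0 hx1
      have hcx : 0 ≤ c * x := mul_nonneg hc hx0
      constructor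
      · show x^2/2 ≤ (1+x)/2 * Real.log ((1+x)/(1-2*ε)) + (1-x)/2 * Real.log ((1-x)/(1+2*ε))
        rw [hdec]; rw [← hc_def, ← hg0_def]; nlinarith
      · show g0 + c * x ≤ (1+x)/2 * Real.log ((1+x)/(1-2*ε)) + (1-x)/2 * Real.log ((1-x)/(1+2*ε))
        rw [hdec]; rw [← hc_def, ← hg0_def]; nlinarith
    · subst heq
      have hg1 : g 1 = Real.log 2 + c + g0 := by
        show (1+1)/2 * Real.log ((1+1)/(1-2*ε)) + (1-1)/2 * Real.log ((1-1)/(1+2*ε))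
          = Real.log 2 + c + g0
        rw [hc_def, hg0_def, Real.log_div (by norm_num) (ne_of_gt hB),
          Real.log_div (ne_of_gt hA) (ne_of_gt hB),
          show (1-4*ε^2 : ℝ) = (1+2*ε)*(1-2*ε) by ring,
          Real.log_mul (ne_of_gt hA) (ne_of_gt hB)]
        ring
      have hl2 := Real.log_two_gt_d9
      constructor
      · rw [hg1]; nlinarith
      · rw [hg1]; nlinarith
  -- integrability of tail
  have hanti : Antitone tail := by
    intro x y hxy
    apply Finset.sum_le_sum
    intro k hk
    have hr : (0:ℝ) ≤ r := by simp only [r]; linarith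
    have hr1 : (0:ℝ) ≤ 1 - r := by simp only [r]; linarith
    by_cases h : (n:ℝ)/2 * (y+1) < k
    · have hx : (n:ℝ)/2 * (x+1) < k := by nlinarith
      rw [if_pos h, if_pos hx]
    · rw [if_neg h]
      split_ifs
      · positivity
      · exact le_refl 0
  have hint_tail : IntervalIntegrable tail MeasureTheory.volume 0 1 :=
    hanti.intervalIntegrable
  refine ⟨hpt, ?_, ?_⟩
  -- part 2
  · have hb : (0:ℝ) < (n:ℝ)/2 := by positivity
    have hcont : Continuous fun x : ℝ => Real.exp (-((n:ℝ)/2) * x^2) := by fun_prop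
    have step1 : (∫ x in (0:ℝ)..1, tail x)
        ≤ ∫ x in (0:ℝ)..1, Real.exp (-((n:ℝ)/2) * x^2) := by
      apply intervalIntegral.integral_mono_on zero_le_one hint_tail
        (hcont.intervalIntegrable 0 1)
      intro x hx
      calc tail x ≤ Real.exp (-(n:ℝ) * g x) := hpt x hx
        _ ≤ Real.exp (-((n:ℝ)/2) * x^2) := by
            apply Real.exp_le_exp.2
            have := (hgq x hx).1
            nlinarith
    have step2 : (∫ x in (0:ℝ)..1, Real.exp (-((n:ℝ)/2) * x^2))
        ≤ ∫ x in Ioi (0:ℝ), Real.exp (-((n:ℝ)/2) * x^2) := by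
      rw [intervalIntegral.integral_of_le zero_le_one]
      apply MeasureTheory.setIntegral_mono_set ((integrable_exp_neg_mul_sq hb).integrableOn)
      · filter_upwards with x using Real.exp_nonneg _
      · exact HasSubset.Subset.eventuallyLE Ioc_subset_Ioi_self
    have step3 : (∫ x in Ioi (0:ℝ), Real.exp (-((n:ℝ)/2) * x^2))
        = Real.sqrt (π / (2 * n)) := by
      rw [integral_gaussian_Ioi]
      rw [show π / ((n:ℝ)/2) = (π / (2*n)) * 4 by field_simp; ring,
        show (4:ℝ) = 2^2 by norm_num, Real.sqrt_mul (by positivity), Real.sqrt_sq (by norm_num)]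
      ring
    linarith
  -- part 3
  · intro hεpos
    have hcpos : 0 < c := by
      apply mul_pos (by norm_num)
      apply Real.log_pos
      rw [lt_div_iff₀ hB]
      linarith
    have hnc : (0:ℝ) < (n:ℝ) * c := by positivity
    have step1 : (∫ x in (0:ℝ)..1, tail x)
        ≤ ∫ x in (0:ℝ)..1, Real.exp (-(n:ℝ)*g0) * Real.exp (-((n:ℝ)*c) * x) := by
      apply intervalIntegral.integral_mono_on zero_le_one hint_tail
        ((by fun_prop : Continuous fun x : ℝ =>
          Real.exp (-(n:ℝ)*g0) * Real.exp (-((n:ℝ)*c) * x)).intervalIntegrable 0 1)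
      intro x hx
      calc tail x ≤ Real.exp (-(n:ℝ) * g x) := hpt x hx
        _ ≤ Real.exp (-(n:ℝ)*g0) * Real.exp (-((n:ℝ)*c) * x) := by
            rw [← Real.exp_add]
            apply Real.exp_le_exp.2
            have h := (hgq x hx).2
            have h2 := mul_le_mul_of_nonneg_left h hnpos.le
            generalize g x = G at h2 ⊢
            nlinarith [h2]
    have hder : ∀ x ∈ Set.uIcc (0:ℝ) 1, HasDerivAt
        (fun x : ℝ => -(Real.exp (-((n:ℝ)*c) * x) / ((n:ℝ)*c)))
        (Real.exp (-((n:ℝ)*c) * x)) x := by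
      intro x _
      have base : HasDerivAt (fun x : ℝ => Real.exp (-((n:ℝ)*c) * x))
          (Real.exp (-((n:ℝ)*c) * x) * (-((n:ℝ)*c))) x := by
        simpa using ((hasDerivAt_id x).const_mul (-((n:ℝ)*c))).exp
      have h2 := (base.div_const ((n:ℝ)*c)).neg
      refine h2.congr_deriv ?_
      field_simp
    have step2 : (∫ x in (0:ℝ)..1, Real.exp (-((n:ℝ)*c) * x))
        = (1 - Real.exp (-((n:ℝ)*c))) / ((n:ℝ)*c) := by
      rw [intervalIntegral.integral_eq_sub_of_hasDerivAt hder
        ((by fun_prop : Continuous fun x : ℝ =>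
          Real.exp (-((n:ℝ)*c) * x)).intervalIntegrable 0 1)]
      field_simp
      simp only [mul_zero, neg_zero, Real.exp_zero]; ring
    rw [intervalIntegral.integral_const_mul, step2] at step1
    calc (∫ x in (0:ℝ)..1, tail x)
        ≤ Real.exp (-(n:ℝ)*g0) * ((1 - Real.exp (-((n:ℝ)*c))) / ((n:ℝ)*c)) := step1
      _ ≤ Real.exp (-(n:ℝ)*g0) / ((n:ℝ)*c) := by
          rw [show Real.exp (-(n:ℝ)*g0) / ((n:ℝ)*c)
            = Real.exp (-(n:ℝ)*g0) * ((1:ℝ)/((n:ℝ)*c)) by ring]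
          gcongr
          linarith [Real.exp_nonneg (-((n:ℝ)*c))]
      _ = _ := by rw [hg0_def, hc_def]
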